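/- Let H be a real Hilbert space and T_i : H → H be α_i-relaxed cutters, α_i ∈ (0,2), i = 1,…,m, with ⋂_i Fix T_i ≠ ∅. For x ∈ H set u⁰ = x, uⁱ = T_i(u^{i−1}), yⁱ = uⁱ − u^{i−1}. Then for every z ∈ ⋂_i Fix T_i, ⟨z − x, T_m⋯T_1(x) − x⟩ ≥ Σ_{i=1}^m ⟨(1/α_i)yⁱ + Σ_{j=i+1}^m yʲ, yⁱ⟩ (with the empty sum convention Σ_{j=m+1}^m yʲ = 0). -/

import Mathlib

open RealInnerProductSpace

theorem string_estimate (H : Type*) [NormedAddCommGroup H] [InnerProductSpace ℝ H]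
    (m : ℕ) (T : Fin m → H → H) (α : Fin m → ℝ)
    (hα : ∀ i, α i ∈ Set.Ioo (0 : ℝ) 2)
    (hcutter : ∀ i, ∀ x z, z ∈ Function.fixedPoints (T i) →
      α i * ⟪T i x - x, z - x⟫ ≥ ‖T i x - x‖ ^ 2)
    (hfix : (⋂ i, Function.fixedPoints (T i)).Nonempty)
    (x : H) (u : Fin (m + 1) → H) (y : Fin m → H)
    (hu0 : u 0 = x)
    (hu : ∀ i : Fin m, u i.succ = T i (u i.castSucc))
    (hy : ∀ i : Fin m, y i = u i.succ - u i.castSucc) :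
    ∀ z, z ∈ ⋂ i, Function.fixedPoints (T i) →
      ⟪z - x, u (Fin.last m) - x⟫ ≥
        ∑ i, ⟪(1 / α i) • y i + ∑ j ∈ Finset.Ioi i, y j, y i⟫ := by
  intro z hz
  have hzfix : ∀ i, z ∈ Function.fixedPoints (T i) := by
    simpa [Set.mem_iInter] using hz
  have hα' : ∀ i, 0 < α i := fun i => (hα i).1
  -- partial sums
  have hpartial : ∀ k : Fin (m + 1),
      u k - x = ∑ j ∈ Finset.univ.filter (fun j : Fin m => j.castSucc < k), y j := by
    intro k
    induction k using Fin.induction with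
    | zero => simp [hu0]
    | succ i ih =>
      have hfil : Finset.univ.filter (fun j : Fin m => j.castSucc < i.succ)
          = insert i (Finset.univ.filter (fun j : Fin m => j.castSucc < i.castSucc)) := by
        ext j
        simp [Fin.castSucc_lt_succ_iff, Fin.castSucc_lt_castSucc_iff, le_iff_lt_or_eq, or_comm]
      have : u i.succ - x = y i + (u i.castSucc - x) := by
        rw [hy i]; abel
      rw [this, ih, hfil, Finset.sum_insert (by simp)]
  have hIio : ∀ i : Fin m, u i.castSucc - x = ∑ j ∈ Finset.Iio i, y j := by
    intro i
    rw [hpartial i.castSucc]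
    apply Finset.sum_congr _ (fun _ _ => rfl)
    ext j; simp [Fin.castSucc_lt_castSucc_iff]
  have hlast : u (Fin.last m) - x = ∑ j, y j := by
    rw [hpartial (Fin.last m)]
    apply Finset.sum_congr _ (fun _ _ => rfl)
    ext j; simp [Fin.castSucc_lt_last]
  -- per-term estimate
  have hterm : ∀ i : Fin m,
      ⟪z - x, y i⟫ ≥ (1 / α i) * ‖y i‖ ^ 2 + ∑ j ∈ Finset.Iio i, ⟪y i, y j⟫ := by
    intro i
    have hc := hcutter i (u i.castSucc) z (hzfix i)
    rw [← hu i, ← hy i] at hc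
    have h1 : ⟪z - u i.castSucc, y i⟫ ≥ (1 / α i) * ‖y i‖ ^ 2 := by
      rw [ge_iff_le, real_inner_comm, div_mul_eq_mul_div, one_mul, div_le_iff₀ (hα' i),
        mul_comm]
      exact hc
    have h2 : ⟪z - x, y i⟫ = ⟪z - u i.castSucc, y i⟫ + ∑ j ∈ Finset.Iio i, ⟪y i, y j⟫ := by
      have : z - x = (z - u i.castSucc) + (u i.castSucc - x) := by abel
      rw [this, inner_add_left, hIio i, sum_inner]
      congr 1
      exact Finset.sum_congr rfl fun j _ => real_inner_comm _ _
    rw [h2]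
    exact add_le_add_left h1 _
  -- rewrite RHS
  have hRHS : (∑ i, ⟪(1 / α i) • y i + ∑ j ∈ Finset.Ioi i, y j, y i⟫) =
      ∑ i, ((1 / α i) * ‖y i‖ ^ 2 + ∑ j ∈ Finset.Iio i, ⟪y i, y j⟫) := by
    have hswap : (∑ i, ∑ j ∈ Finset.Ioi i, (⟪y j, y i⟫ : ℝ))
        = ∑ i : Fin m, ∑ j ∈ Finset.Iio i, ⟪y i, y j⟫ := by
      refine Finset.sum_comm' ?_
      intro a b
      simp only [Finset.mem_univ, Finset.mem_Ioi, Finset.mem_Iio, true_and, and_true]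
    calc (∑ i, ⟪(1 / α i) • y i + ∑ j ∈ Finset.Ioi i, y j, y i⟫)
        = ∑ i, ((1 / α i) * ‖y i‖ ^ 2 + ∑ j ∈ Finset.Ioi i, (⟪y j, y i⟫ : ℝ)) := by
          refine Finset.sum_congr rfl fun i _ => ?_
          rw [inner_add_left, real_inner_smul_left, real_inner_self_eq_norm_sq, sum_inner]
      _ = (∑ i, (1 / α i) * ‖y i‖ ^ 2) + ∑ i, ∑ j ∈ Finset.Ioi i, (⟪y j, y i⟫ : ℝ) := by
          rw [Finset.sum_add_distrib]
      _ = (∑ i, (1 / α i) * ‖y i‖ ^ 2) + ∑ i : Fin m, ∑ j ∈ Finset.Iio i, ⟪y i, y j⟫ := by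
          rw [hswap]
      _ = _ := by rw [Finset.sum_add_distrib]
  rw [hRHS]
  have hLHS : ⟪z - x, u (Fin.last m) - x⟫ = ∑ i, ⟪z - x, y i⟫ := by
    rw [hlast, inner_sum]
  rw [hLHS]
  exact Finset.sum_le_sum fun i _ => hterm i
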